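/- Let μ be the nonadditive measure on (ℕ, 2^ℕ) defined by μ(∅) = 0 and μ(A) = |A| · Σ_{i∈A} 2^{-i} for nonempty finite A (and ∞ for infinite A). Let M₀ := (q/p)^{1/q}, f := M₀·χ_{{1}} and f_n := M₀·χ_{{1, n+1}}. Then (f_n - f)_{p,q} → 0, (f_n)_{p,q} = 1 for every n, and (f)_{p,q} < 1. Hence the sphere {g : (g)_{p,q} < 1} is not open in the Sugeno-Lorentz topology. -/

import Mathlib

open scoped NNReal ENNReal
open ENNReal Filter Topology

variable {X : Type*} [MeasurableSpace X]

/-- The Sugeno integral of `g` w.r.t. a nonadditive measure `μ`: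
`Su(μ,g) := sup_{t ∈ [0,∞)} min(t, μ({g > t}))`. -/
noncomputable def Su (μ : Set X → ℝ≥0∞) (g : X → ℝ≥0∞) : ℝ≥0∞ :=
  ⨆ t : ℝ≥0, min (t : ℝ≥0∞) (μ {x | (t : ℝ≥0∞) < g x})

/-- The Sugeno-Lorentz prenorm `(f)_{p,q} := (Su(μ^{p/q}, (p/q)|f|^q))^{1/q}`. -/
noncomputable def SL (μ : Set X → ℝ≥0∞) (p q : ℝ) (f : X → ℝ) : ℝ≥0∞ :=
  (Su (fun A => μ A ^ (p / q)) (fun x => ENNReal.ofReal ((p / q) * |f x| ^ q))) ^ (1 / q)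

attribute [local instance] Classical.propDecidable

/-- The nonadditive measure on `(ℕ, 2^ℕ)` with `μ(∅)=0` and
`μ(A) = |A| · Σ_{i∈A} 2^{-i}` (with `|A| = ∞` for infinite `A`). -/
noncomputable def mu18 : Set ℕ → ℝ≥0∞ := fun A =>
  (if A.Finite then (A.ncard : ℝ≥0∞) else ∞) * ∑' i : A, (2 : ℝ≥0∞)⁻¹ ^ (i : ℕ)

lemma mu18_empty : mu18 ∅ = 0 := by
  simp [mu18]

lemma mu18_singleton (a : ℕ) : mu18 {a} = 2⁻¹ ^ a := by
  simp [mu18, Set.finite_singleton, tsum_singleton]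

lemma mu18_pair {a b : ℕ} (h : a ≠ b) : mu18 {a, b} = 2 * (2⁻¹ ^ a + 2⁻¹ ^ b) := by
  have hfin : ({a, b} : Set ℕ).Finite := (Set.finite_singleton b).insert a
  have hcoe : ({a, b} : Set ℕ) = (↑({a, b} : Finset ℕ) : Set ℕ) := by simp
  rw [mu18, if_pos hfin, Set.ncard_pair h, hcoe, Finset.tsum_subtype',
    Finset.sum_insert (by simpa using h), Finset.sum_singleton]
  norm_num

lemma Su_indicator (ν : Set ℕ → ℝ≥0∞) (hν : ν ∅ = 0) (A : Set ℕ) :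
    Su ν (fun x => if x ∈ A then (1 : ℝ≥0∞) else 0) = min 1 (ν A) := by
  unfold Su
  apply le_antisymm
  · apply iSup_le; intro t
    by_cases ht : (t : ℝ≥0∞) < 1
    · have hset : {x : ℕ | (t : ℝ≥0∞) < if x ∈ A then 1 else 0} = A := by
        ext x; by_cases hx : x ∈ A <;> simp [hx, ht]
      rw [hset]
      exact min_le_min ht.le le_rfl
    · have hset : {x : ℕ | (t : ℝ≥0∞) < if x ∈ A then 1 else 0} = ∅ := by
        ext x; by_cases hx : x ∈ A <;> simp [hx, ht]
      rw [hset, hν]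
      simp
  · refine le_of_forall_lt fun a ha => ?_
    obtain ⟨b, hab, hb⟩ := exists_between ha
    have hb1 : b < 1 := lt_of_lt_of_le hb (min_le_left _ _)
    have hbc : b < ν A := lt_of_lt_of_le hb (min_le_right _ _)
    lift b to ℝ≥0 using (hb1.trans ENNReal.one_lt_top).ne
    refine lt_of_lt_of_le ?_ (le_iSup _ b)
    have hset : {x : ℕ | (b : ℝ≥0∞) < if x ∈ A then 1 else 0} = A := by
      ext x; by_cases hx : x ∈ A <;> simp [hx, hb1]
    rw [hset]
    exact lt_min hab (hab.trans hbc)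

lemma SL_indicator (p q : ℝ) (hp : 0 < p) (hq : 0 < q) (A : Set ℕ) :
    SL mu18 p q (A.indicator fun _ => (q / p) ^ (1 / q))
      = (min 1 (mu18 A ^ (p / q))) ^ (1 / q) := by
  have hinner : (fun x => ENNReal.ofReal
      ((p / q) * |(A.indicator fun _ => (q / p) ^ (1 / q)) x| ^ q))
      = fun x => if x ∈ A then (1 : ℝ≥0∞) else 0 := by
    funext x
    by_cases hx : x ∈ A
    · rw [Set.indicator_of_mem hx, if_pos hx,
        abs_of_nonneg (Real.rpow_nonneg (by positivity) _),
        ← Real.rpow_mul (by positivity), one_div_mul_cancel hq.ne', Real.rpow_one,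
        show p / q * (q / p) = 1 by field_simp]
      simp
    · rw [Set.indicator_of_notMem hx, if_neg hx]
      simp [Real.zero_rpow hq.ne']
  rw [SL, hinner, Su_indicator _ (by rw [mu18_empty]; exact ENNReal.zero_rpow_of_pos (by positivity))]


/-- With `f := M₀·χ_{{1}}` and `f_n := M₀·χ_{{1,n+1}}` (`n ≥ 1`, here indexed by
`n ↦ {1, n+2}`), one has `(f_n-f)_{p,q} → 0`, `(f_n)_{p,q} = 1`, `(f)_{p,q} < 1`;
hence the sphere `{g : (g)_{p,q} < 1}` is not open in the Sugeno-Lorentz topology. -/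
theorem sphere_not_open (p q : ℝ) (hp : 0 < p) (hq : 0 < q) :
    Tendsto
        (fun n => SL mu18 p q
          (fun m => (({1, n + 2} : Set ℕ).indicator fun _ => (q / p) ^ (1 / q)) m -
            (({1} : Set ℕ).indicator fun _ => (q / p) ^ (1 / q)) m))
        atTop (𝓝 0) ∧
      (∀ n : ℕ, SL mu18 p q (({1, n + 2} : Set ℕ).indicator fun _ => (q / p) ^ (1 / q)) = 1) ∧
      SL mu18 p q (({1} : Set ℕ).indicator fun _ => (q / p) ^ (1 / q)) < 1 ∧
      ¬ (∀ g : ℕ → ℝ, SL mu18 p q g < 1 →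
          ∃ r : ℝ≥0∞, 0 < r ∧
            ∀ h : ℕ → ℝ, SL mu18 p q (g - h) < r → SL mu18 p q h < 1) := by
  have hpq : (0:ℝ) < p / q := by positivity
  have hq1 : (0:ℝ) < 1 / q := by positivity
  -- difference function is the indicator of {n+2}
  have hdiff : ∀ n : ℕ,
      (fun m => (({1, n + 2} : Set ℕ).indicator fun _ => (q / p) ^ (1 / q)) m -
          (({1} : Set ℕ).indicator fun _ => (q / p) ^ (1 / q)) m)
        = ({n + 2} : Set ℕ).indicator fun _ => (q / p) ^ (1 / q) := by
    intro n
    funext m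
    have h12 : (1 : ℕ) ≠ n + 2 := by omega
    rcases eq_or_ne m 1 with rfl | hm1
    · simp [Set.indicator_apply, h12.symm]
    · rcases eq_or_ne m (n + 2) with rfl | hm2
      · simp [Set.indicator_apply, hm1]
      · simp [Set.indicator_apply, hm1, hm2]
  -- Part 1 : tendsto
  have part1 : Tendsto
      (fun n => SL mu18 p q
        (fun m => (({1, n + 2} : Set ℕ).indicator fun _ => (q / p) ^ (1 / q)) m -
          (({1} : Set ℕ).indicator fun _ => (q / p) ^ (1 / q)) m))
      atTop (𝓝 0) := by
    set c : ℝ≥0∞ := (2⁻¹ : ℝ≥0∞) ^ ((p / q) * (1 / q)) with hc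
    have hclt : c < 1 := ENNReal.rpow_lt_one (by norm_num) (by positivity)
    have hbound : ∀ n : ℕ, SL mu18 p q
        (fun m => (({1, n + 2} : Set ℕ).indicator fun _ => (q / p) ^ (1 / q)) m -
          (({1} : Set ℕ).indicator fun _ => (q / p) ^ (1 / q)) m) ≤ c ^ (n + 2) := by
      intro n
      rw [hdiff n, SL_indicator p q hp hq, mu18_singleton]
      calc (min 1 (((2⁻¹:ℝ≥0∞) ^ (n+2)) ^ (p / q))) ^ (1 / q)
          ≤ (((2⁻¹:ℝ≥0∞) ^ (n+2)) ^ (p / q)) ^ (1 / q) :=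
            ENNReal.rpow_le_rpow (min_le_right _ _) hq1.le
        _ = c ^ (n + 2) := by
            rw [← ENNReal.rpow_natCast (2⁻¹:ℝ≥0∞) (n+2), ← ENNReal.rpow_mul,
              ← ENNReal.rpow_mul, hc, ← ENNReal.rpow_natCast
                ((2⁻¹:ℝ≥0∞) ^ (p / q * (1 / q))) (n+2), ← ENNReal.rpow_mul]
            ring_nf
    have htc : Tendsto (fun n : ℕ => c ^ (n + 2)) atTop (𝓝 0) :=
      (ENNReal.tendsto_pow_atTop_nhds_zero_of_lt_one hclt).comp (tendsto_add_atTop_nat 2)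
    exact tendsto_of_tendsto_of_tendsto_of_le_of_le tendsto_const_nhds htc
      (fun n => zero_le) hbound
  -- Part 2
  have part2 : ∀ n : ℕ,
      SL mu18 p q (({1, n + 2} : Set ℕ).indicator fun _ => (q / p) ^ (1 / q)) = 1 := by
    intro n
    rw [SL_indicator p q hp hq, mu18_pair (show (1:ℕ) ≠ n + 2 by omega)]
    have h1 : (1 : ℝ≥0∞) ≤ 2 * ((2:ℝ≥0∞)⁻¹ ^ 1 + 2⁻¹ ^ (n + 2)) := by
      calc (1:ℝ≥0∞) = 2 * 2⁻¹ ^ 1 := by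
            rw [pow_one, ENNReal.mul_inv_cancel (by norm_num) (by norm_num)]
        _ ≤ _ := by
            gcongr
            exact le_self_add
    rw [min_eq_left (ENNReal.one_le_rpow h1 hpq)]
    exact ENNReal.one_rpow _
  -- Part 3
  have part3 : SL mu18 p q (({1} : Set ℕ).indicator fun _ => (q / p) ^ (1 / q)) < 1 := by
    rw [SL_indicator p q hp hq, mu18_singleton]
    have h1 : ((2:ℝ≥0∞)⁻¹ ^ 1) ^ (p / q) < 1 :=
      ENNReal.rpow_lt_one (by norm_num) hpq
    rw [min_eq_right h1.le]
    exact ENNReal.rpow_lt_one h1 hq1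
  refine ⟨part1, part2, part3, ?_⟩
  intro H
  obtain ⟨r, hr, hr'⟩ := H _ part3
  have hev := (part1.eventually (gt_mem_nhds hr)).exists
  obtain ⟨n, hn⟩ := hev
  have hsl : SL mu18 p q
      ((({1} : Set ℕ).indicator fun _ => (q / p) ^ (1 / q)) -
        (({1, n + 2} : Set ℕ).indicator fun _ => (q / p) ^ (1 / q))) < r := by
    have habs : (fun x => ENNReal.ofReal ((p / q) *
        |((({1} : Set ℕ).indicator fun _ => (q / p) ^ (1 / q)) -
          (({1, n + 2} : Set ℕ).indicator fun _ => (q / p) ^ (1 / q))) x| ^ q))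
        = fun x => ENNReal.ofReal ((p / q) *
        |(fun m => (({1, n + 2} : Set ℕ).indicator fun _ => (q / p) ^ (1 / q)) m -
          (({1} : Set ℕ).indicator fun _ => (q / p) ^ (1 / q)) m) x| ^ q) := by
      funext x
      rw [Pi.sub_apply, abs_sub_comm]
    rw [SL, habs, ← SL]
    exact hn
  have := hr' _ hsl
  rw [part2 n] at this
  exact lt_irrefl 1 this
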